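/- Let n > 0 and μ ≥ 0, and set d = (1/4)(2 − n + √((n−2)² + 8μ)), α = d + n/2, and β = 2d + n/2. For all t > 0, x > 0, and λ ≥ 0, with p(t,x,y) = (1/(2t)) (x/y)^{(1−n/2)/2} I_{β−1}(√(xy)/t) exp( −(x+y)/(2t) ), one has ∫_0^∞ e^{−λ y} p(t,x,y) dy = e^{−x/(2t)} (x/(2t))^d · Γ(α) ₁F₁(α, β, x/(2t + 4t²λ)) / ( Γ(β) (1 + 2λt)^α ). -/

import Mathlib

open Real MeasureTheory

/-- The modified Bessel function of the first kind,
`I_ν(z) = ∑_{k=0}^∞ (z/2)^{2k+ν} / (k! Γ(k+ν+1))`. -/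
noncomputable def besselI (ν z : ℝ) : ℝ :=
  ∑' k : ℕ, (z / 2) ^ (2 * (k : ℝ) + ν) / ((Nat.factorial k : ℝ) * Real.Gamma ((k : ℝ) + ν + 1))

/-- Kummer's confluent hypergeometric function
`₁F₁(a,b,z) = ∑_{k=0}^∞ ((a)_k/(b)_k) zᵏ/k!`. -/
noncomputable def hyp1F1 (a b z : ℝ) : ℝ :=
  ∑' k : ℕ, ((∏ i ∈ Finset.range k, (a + (i : ℝ))) / (∏ i ∈ Finset.range k, (b + (i : ℝ))))
      * z ^ k / (Nat.factorial k : ℝ)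

lemma aux_prod_pos {c : ℝ} (hc : 0 < c) (k : ℕ) :
    0 < ∏ i ∈ Finset.range k, (c + (i : ℝ)) :=
  Finset.prod_pos fun i _ => by positivity

lemma aux_Gamma_add_nat {c : ℝ} (hc : 0 < c) (k : ℕ) :
    Real.Gamma ((k : ℝ) + c) = Real.Gamma c * ∏ i ∈ Finset.range k, (c + (i : ℝ)) := by
  induction k with
  | zero => simp
  | succ k ih =>
    have h1 : ((k + 1 : ℕ) : ℝ) + c = ((k : ℝ) + c) + 1 := by push_cast; ring
    rw [h1, Real.Gamma_add_one (by positivity), ih, Finset.prod_range_succ]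
    ring

lemma aux_summable {a b z : ℝ} (ha : 0 < a) (hab : a ≤ b) (hz : 0 ≤ z) :
    Summable (fun k : ℕ =>
      ((∏ i ∈ Finset.range k, (a + (i : ℝ))) / (∏ i ∈ Finset.range k, (b + (i : ℝ))))
        * z ^ k / (Nat.factorial k : ℝ)) := by
  have hb : 0 < b := lt_of_lt_of_le ha hab
  refine Summable.of_nonneg_of_le (fun k => by positivity) (fun k => ?_)
    (Real.summable_pow_div_factorial z)
  have hr : (∏ i ∈ Finset.range k, (a + (i : ℝ))) / (∏ i ∈ Finset.range k, (b + (i : ℝ))) ≤ 1 := by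
    rw [div_le_one (aux_prod_pos hb k)]
    exact Finset.prod_le_prod (fun i _ => by positivity) (fun i _ => by linarith)
  calc _ ≤ 1 * z ^ k / (Nat.factorial k : ℝ) := by
        apply div_le_div_of_nonneg_right ?_ (by positivity)
        exact mul_le_mul_of_nonneg_right hr (by positivity)
       _ = z ^ k / (Nat.factorial k : ℝ) := by ring

lemma aux_split {t x y : ℝ} (ht : 0 < t) (hx : 0 < x) (hy : 0 < y) (c e : ℝ) :
    (x / y) ^ c * (Real.sqrt (x * y) / t / 2) ^ e
      = x ^ (c + e / 2) * y ^ (e / 2 - c) / (2 * t) ^ e := by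
  have h1 : Real.sqrt (x * y) / t / 2 = Real.sqrt x * Real.sqrt y / (2 * t) := by
    rw [Real.sqrt_mul hx.le]; ring
  have hsx : Real.sqrt x ^ e = x ^ (e / 2) := by
    rw [Real.sqrt_eq_rpow, ← Real.rpow_mul hx.le]; congr 1; ring
  have hsy : Real.sqrt y ^ e = y ^ (e / 2) := by
    rw [Real.sqrt_eq_rpow, ← Real.rpow_mul hy.le]; congr 1; ring
  rw [h1, Real.div_rpow hx.le hy.le,
    Real.div_rpow (mul_nonneg (Real.sqrt_nonneg x) (Real.sqrt_nonneg y))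
      (by positivity : (0:ℝ) ≤ 2 * t),
    Real.mul_rpow (Real.sqrt_nonneg x) (Real.sqrt_nonneg y), hsx, hsy,
    Real.rpow_add hx, Real.rpow_sub hy]
  have h2 : (0:ℝ) < y ^ c := Real.rpow_pos_of_pos hy c
  have h3 : (0:ℝ) < (2 * t) ^ e := Real.rpow_pos_of_pos (by linarith) e
  field_simp

/-- The two-dimensional Laplace transform of the joint density of
`(X_t, ∫_0^t X_s^{-1} ds)` for the squared Bessel process, computed from the fundamental
solution (4.3) of `u_t = 2x u_xx + n u_x - (μ/x) u`. -/
theorem stmt_11 (n μ d α β t x lam : ℝ) (hn : 0 < n) (hμ : 0 ≤ μ)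
    (hd : d = (1 / 4) * (2 - n + Real.sqrt ((n - 2) ^ 2 + 8 * μ)))
    (hα : α = d + n / 2) (hβ : β = 2 * d + n / 2)
    (ht : 0 < t) (hx : 0 < x) (hlam : 0 ≤ lam)
    (p : ℝ → ℝ)
    (hp : ∀ y, p y = (1 / (2 * t)) * (x / y) ^ ((1 - n / 2) / 2)
        * besselI (β - 1) (Real.sqrt (x * y) / t)
        * Real.exp (-(x + y) / (2 * t))) :
    (∫ y in Set.Ioi (0 : ℝ), Real.exp (-lam * y) * p y)
      = Real.exp (-x / (2 * t)) * (x / (2 * t)) ^ d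
        * (Real.Gamma α * hyp1F1 α β (x / (2 * t + 4 * t ^ 2 * lam)))
          / (Real.Gamma β * (1 + 2 * lam * t) ^ α) := by
  have hT : (0:ℝ) < 2 * t := by linarith
  have hd0 : 0 ≤ d := by
    have h1 : Real.sqrt ((n - 2) ^ 2) ≤ Real.sqrt ((n - 2) ^ 2 + 8 * μ) :=
      Real.sqrt_le_sqrt (by linarith)
    rw [Real.sqrt_sq_eq_abs] at h1
    have h3 : n - 2 ≤ Real.sqrt ((n - 2) ^ 2 + 8 * μ) := le_trans (le_abs_self _) h1
    rw [hd]; linarith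
  have hα0 : 0 < α := by rw [hα]; linarith
  have hβ0 : 0 < β := by rw [hβ]; linarith
  have hαβ : α ≤ β := by rw [hα, hβ]; linarith
  have hβα : β = d + α := by rw [hα, hβ]; ring
  set L : ℝ := 1 + 2 * lam * t with hLdef
  have hL : (0:ℝ) < L := by
    have h0 : 0 ≤ 2 * lam * t := by positivity
    rw [hLdef]; linarith
  set a : ℝ := lam + 1 / (2 * t) with hadef
  have ha : 0 < a := add_pos_of_nonneg_of_pos hlam (one_div_pos.mpr hT)
  have haL : a = L / (2 * t) := by rw [hadef, hLdef]; field_simp; ring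
  set z : ℝ := x / (2 * t * L) with hzdef
  have hz : 0 ≤ z := by positivity
  have hzarg : 2 * t + 4 * t ^ 2 * lam = 2 * t * L := by rw [hLdef]; ring
  rw [hzarg, ← hzdef]
  set g : ℕ → ℝ → ℝ := fun k y =>
    (Real.exp (-x / (2 * t)) * x ^ ((k : ℝ) + d)
      / ((2 * t) ^ (2 * (k : ℝ) + β) * (Nat.factorial k : ℝ) * Real.Gamma ((k : ℝ) + β)))
      * (y ^ ((k : ℝ) + α - 1) * Real.exp (-(a * y))) with hg
  have hΓβk : ∀ k : ℕ, (0:ℝ) < Real.Gamma ((k : ℝ) + β) := fun k =>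
    Real.Gamma_pos_of_pos (add_pos_of_nonneg_of_pos (Nat.cast_nonneg k) hβ0)
  have hαk : ∀ k : ℕ, (0:ℝ) < (k : ℝ) + α := fun k =>
    add_pos_of_nonneg_of_pos (Nat.cast_nonneg k) hα0
  -- Step 1: pointwise expansion of the integrand as a series
  have hpt : ∀ y ∈ Set.Ioi (0:ℝ), Real.exp (-lam * y) * p y = ∑' k, g k y := by
    intro y hy
    have hy0 : (0:ℝ) < y := Set.mem_Ioi.mp hy
    have hrw : Real.exp (-lam * y) * p y
        = (Real.exp (-lam * y) * (1 / (2 * t)) * Real.exp (-(x + y) / (2 * t))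
            * (x / y) ^ ((1 - n / 2) / 2))
          * besselI (β - 1) (Real.sqrt (x * y) / t) := by
      rw [hp y]; ring
    rw [hrw, besselI, ← tsum_mul_left]
    refine tsum_congr fun k => ?_
    have he1 : (k : ℝ) + (β - 1) + 1 = (k : ℝ) + β := by ring
    have he2 : 2 * (k : ℝ) + (β - 1) = 2 * (k : ℝ) + β - 1 := by ring
    rw [he1, he2, hg]
    have key := aux_split ht hx hy0 ((1 - n / 2) / 2) (2 * (k : ℝ) + β - 1)
    have hex : (1 - n / 2) / 2 + (2 * (k : ℝ) + β - 1) / 2 = (k : ℝ) + d := by rw [hβ]; ring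
    have hey : (2 * (k : ℝ) + β - 1) / 2 - (1 - n / 2) / 2 = (k : ℝ) + α - 1 := by
      rw [hα, hβ]; ring
    rw [hex, hey] at key
    have hT2 : (2 * t) ^ (2 * (k : ℝ) + β) = (2 * t) ^ (2 * (k : ℝ) + β - 1) * (2 * t) := by
      rw [← Real.rpow_add_one (ne_of_gt hT)]; congr 1; ring
    have hexp : Real.exp (-lam * y) * Real.exp (-(x + y) / (2 * t))
        = Real.exp (-x / (2 * t)) * Real.exp (-(a * y)) := by
      rw [← Real.exp_add, ← Real.exp_add]
      congr 1
      rw [hadef]; field_simp; ring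
    have hpos1 : (0:ℝ) < (2 * t) ^ (2 * (k : ℝ) + β - 1) := Real.rpow_pos_of_pos hT _
    have hposΓ : Real.Gamma ((k : ℝ) + β) ≠ 0 := ne_of_gt (hΓβk k)
    have hfk : ((Nat.factorial k : ℝ)) ≠ 0 := Nat.cast_ne_zero.mpr (Nat.factorial_ne_zero k)
    calc (Real.exp (-lam * y) * (1 / (2 * t)) * Real.exp (-(x + y) / (2 * t))
            * (x / y) ^ ((1 - n / 2) / 2))
          * ((Real.sqrt (x * y) / t / 2) ^ (2 * (k : ℝ) + β - 1)
              / ((Nat.factorial k : ℝ) * Real.Gamma ((k : ℝ) + β)))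
        = (Real.exp (-lam * y) * Real.exp (-(x + y) / (2 * t)))
            * ((x / y) ^ ((1 - n / 2) / 2)
                * (Real.sqrt (x * y) / t / 2) ^ (2 * (k : ℝ) + β - 1))
            * (1 / (2 * t)) / ((Nat.factorial k : ℝ) * Real.Gamma ((k : ℝ) + β)) := by ring
      _ = (Real.exp (-x / (2 * t)) * Real.exp (-(a * y)))
            * (x ^ ((k : ℝ) + d) * y ^ ((k : ℝ) + α - 1) / (2 * t) ^ (2 * (k : ℝ) + β - 1))
            * (1 / (2 * t)) / ((Nat.factorial k : ℝ) * Real.Gamma ((k : ℝ) + β)) := by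
          rw [hexp, key]
      _ = (Real.exp (-x / (2 * t)) * x ^ ((k : ℝ) + d)
          / ((2 * t) ^ (2 * (k : ℝ) + β) * (Nat.factorial k : ℝ) * Real.Gamma ((k : ℝ) + β)))
        * (y ^ ((k : ℝ) + α - 1) * Real.exp (-(a * y))) := by
          rw [hT2]; field_simp
  -- Step 2: integrability of each term
  have hint : ∀ k : ℕ, IntegrableOn (g k) (Set.Ioi (0:ℝ)) := by
    intro k
    rw [hg]
    apply Integrable.const_mul
    have h1 := integrableOn_rpow_mul_exp_neg_mul_rpow (s := (k:ℝ) + α - 1) (p := 1) (b := a)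
      (by linarith [hαk k]) zero_lt_one ha
    simpa [Real.rpow_one, neg_mul, IntegrableOn] using h1
  -- Step 3: value of each term integral
  have hval : ∀ k : ℕ, (∫ y in Set.Ioi (0:ℝ), g k y)
      = (Real.exp (-x / (2 * t)) * x ^ ((k : ℝ) + d)
          / ((2 * t) ^ (2 * (k : ℝ) + β) * (Nat.factorial k : ℝ) * Real.Gamma ((k : ℝ) + β)))
        * ((1 / a) ^ ((k : ℝ) + α) * Real.Gamma ((k : ℝ) + α)) := by
    intro k
    rw [hg]
    rw [MeasureTheory.integral_const_mul]
    rw [integral_rpow_mul_exp_neg_mul_Ioi (hαk k) ha]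
  -- Step D: the termwise closed form
  have hterm : ∀ k : ℕ,
      (Real.exp (-x / (2 * t)) * x ^ ((k : ℝ) + d)
          / ((2 * t) ^ (2 * (k : ℝ) + β) * (Nat.factorial k : ℝ) * Real.Gamma ((k : ℝ) + β)))
        * ((1 / a) ^ ((k : ℝ) + α) * Real.Gamma ((k : ℝ) + α))
      = (Real.exp (-x / (2 * t)) * (x / (2 * t)) ^ d * Real.Gamma α / (Real.Gamma β * L ^ α))
        * (((∏ i ∈ Finset.range k, (α + (i : ℝ))) / (∏ i ∈ Finset.range k, (β + (i : ℝ))))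
            * z ^ k / (Nat.factorial k : ℝ)) := by
    intro k
    rw [aux_Gamma_add_nat hα0 k, aux_Gamma_add_nat hβ0 k]
    have h1 : x ^ ((k : ℝ) + d) = x ^ k * x ^ d := by
      rw [Real.rpow_add hx, Real.rpow_natCast]
    have h2a : (2 * t) ^ (2 * (k : ℝ)) = (2 * t) ^ k * (2 * t) ^ k := by
      rw [show (2 * (k : ℝ)) = (k : ℝ) + (k : ℝ) by ring, Real.rpow_add hT, Real.rpow_natCast]
    have h2 : (2 * t) ^ (2 * (k : ℝ) + β)
        = ((2 * t) ^ k * (2 * t) ^ k) * ((2 * t) ^ d * (2 * t) ^ α) := by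
      rw [Real.rpow_add hT, h2a, hβα, Real.rpow_add hT]
    have hia : 1 / a = 2 * t / L := by rw [haL]; field_simp
    have h3 : (1 / a) ^ ((k : ℝ) + α) = ((2 * t) ^ k / L ^ k) * ((2 * t) ^ α / L ^ α) := by
      rw [Real.rpow_add (by positivity), hia, Real.rpow_natCast,
        Real.div_rpow hT.le hL.le, div_pow]
    have h4 : (x / (2 * t)) ^ d = x ^ d / (2 * t) ^ d := Real.div_rpow hx.le hT.le d
    have h5 : z ^ k = x ^ k / ((2 * t) ^ k * L ^ k) := by
      rw [hzdef, div_pow, mul_pow]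
    rw [h1, h2, h3, h4, h5]
    have pβ : (0:ℝ) < ∏ i ∈ Finset.range k, (β + (i : ℝ)) := aux_prod_pos hβ0 k
    have pγ : (0:ℝ) < Real.Gamma β := Real.Gamma_pos_of_pos hβ0
    have p7 : (0:ℝ) < (2 * t) ^ d := Real.rpow_pos_of_pos hT d
    have p8 : (0:ℝ) < (2 * t) ^ α := Real.rpow_pos_of_pos hT α
    have p9 : (0:ℝ) < L ^ α := Real.rpow_pos_of_pos hL α
    have p10 : (0:ℝ) < (Nat.factorial k : ℝ) := Nat.cast_pos.mpr (Nat.factorial_pos k)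
    have p11 : (0:ℝ) < (2 * t) ^ k := pow_pos hT k
    have p12 : (0:ℝ) < L ^ k := pow_pos hL k
    field_simp
  -- summability of the series of integrals
  have hwsum : Summable (fun k : ℕ =>
      ((∏ i ∈ Finset.range k, (α + (i : ℝ))) / (∏ i ∈ Finset.range k, (β + (i : ℝ))))
        * z ^ k / (Nat.factorial k : ℝ)) := aux_summable hα0 hαβ hz
  have hnorm : ∀ k : ℕ, (∫ y in Set.Ioi (0:ℝ), ‖g k y‖) = ∫ y in Set.Ioi (0:ℝ), g k y := by
    intro k
    refine MeasureTheory.setIntegral_congr_fun measurableSet_Ioi (fun y hy => ?_)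
    have hy0 : (0:ℝ) < y := Set.mem_Ioi.mp hy
    refine Real.norm_of_nonneg ?_
    rw [hg]
    have q1 : (0:ℝ) < (2 * t) ^ (2 * (k : ℝ) + β) := Real.rpow_pos_of_pos hT _
    have q2 : (0:ℝ) < x ^ ((k : ℝ) + d) := Real.rpow_pos_of_pos hx _
    have q3 : (0:ℝ) < y ^ ((k : ℝ) + α - 1) := Real.rpow_pos_of_pos hy0 _
    have p10 : (0:ℝ) < (Nat.factorial k : ℝ) := Nat.cast_pos.mpr (Nat.factorial_pos k)
    have := hΓβk k
    positivity
  have hsum : Summable (fun k : ℕ => ∫ y in Set.Ioi (0:ℝ), ‖g k y‖) := by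
    have heq : (fun k : ℕ => ∫ y in Set.Ioi (0:ℝ), ‖g k y‖)
        = fun k => (Real.exp (-x / (2 * t)) * (x / (2 * t)) ^ d * Real.Gamma α
            / (Real.Gamma β * L ^ α))
          * (((∏ i ∈ Finset.range k, (α + (i : ℝ))) / (∏ i ∈ Finset.range k, (β + (i : ℝ))))
            * z ^ k / (Nat.factorial k : ℝ)) := by
      funext k
      rw [hnorm k, hval k, hterm k]
    rw [heq]
    exact hwsum.mul_left _
  -- Step 4: interchange sum and integral, conclude
  calc (∫ y in Set.Ioi (0:ℝ), Real.exp (-lam * y) * p y)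
      = ∫ y in Set.Ioi (0:ℝ), ∑' k, g k y :=
        MeasureTheory.setIntegral_congr_fun measurableSet_Ioi hpt
    _ = ∑' k, ∫ y in Set.Ioi (0:ℝ), g k y :=
        (MeasureTheory.integral_tsum_of_summable_integral_norm hint hsum).symm
    _ = ∑' k : ℕ, (Real.exp (-x / (2 * t)) * (x / (2 * t)) ^ d * Real.Gamma α
            / (Real.Gamma β * L ^ α))
          * (((∏ i ∈ Finset.range k, (α + (i : ℝ))) / (∏ i ∈ Finset.range k, (β + (i : ℝ))))
            * z ^ k / (Nat.factorial k : ℝ)) :=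
        tsum_congr fun k => (hval k).trans (hterm k)
    _ = (Real.exp (-x / (2 * t)) * (x / (2 * t)) ^ d * Real.Gamma α
            / (Real.Gamma β * L ^ α)) * hyp1F1 α β z := by
        rw [hyp1F1, tsum_mul_left]
    _ = Real.exp (-x / (2 * t)) * (x / (2 * t)) ^ d
        * (Real.Gamma α * hyp1F1 α β z) / (Real.Gamma β * L ^ α) := by ring
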